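/- arXiv:2106.04642 — 4 statements merged into one kernel-verified Lean document; each statement's English description precedes it below -/
import Mathlib

section
/- Let A be a matrix in SU(1,1;ℍ) with row vectors (a,b) and (c,d), and let q be a quaternion with |q| < 1. Then c·q + d ≠ 0 and |(a·q + b)·(c·q + d)⁻¹| < 1; that is, the linear fractional transformation A·q = (aq+b)(cq+d)⁻¹ is defined on the open unit ball B⁴ = {q ∈ ℍ : |q| < 1} and maps B⁴ into B⁴. -/
open Matrix Quaternion

noncomputable section

/-- The matrix `J = diag(1, -1)` in `M₂(ℍ)`. -/
def Jq : Matrix (Fin 2) (Fin 2) (Quaternion ℝ) := !![1, 0; 0, -1]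

/-- `SU(1,1;ℍ) = {A ∈ M₂(ℍ) : A*JA = J}`. -/
def SU11H : Set (Matrix (Fin 2) (Fin 2) (Quaternion ℝ)) := {A | Aᴴ * Jq * A = Jq}

theorem stmt4 (A : Matrix (Fin 2) (Fin 2) (Quaternion ℝ)) (hA : A ∈ SU11H)
    (a b c d : Quaternion ℝ)
    (ha : a = A 0 0) (hb : b = A 0 1) (hc : c = A 1 0) (hd : d = A 1 1)
    (q : Quaternion ℝ) (hq : ‖q‖ < 1) :
    c * q + d ≠ 0 ∧ ‖(a * q + b) * (c * q + d)⁻¹‖ < 1 := by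
  have hA' : Aᴴ * Jq * A = Jq := hA
  set V : Matrix (Fin 2) (Fin 1) (Quaternion ℝ) := !![q; 1] with hV
  have key : ((A * V)ᴴ * Jq * (A * V)) 0 0 = (Vᴴ * Jq * V) 0 0 := by
    have : (A * V)ᴴ * Jq * (A * V) = Vᴴ * (Aᴴ * Jq * A) * V := by
      rw [conjTranspose_mul]
      simp only [Matrix.mul_assoc]
    rw [this, hA']
  have key2 : star (a * q + b) * (a * q + b) - star (c * q + d) * (c * q + d)
      = star q * q - 1 := by
    simp [hV, Jq, Matrix.mul_apply, Fin.sum_univ_two, Fin.sum_univ_one,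
      Matrix.conjTranspose_apply] at key
    rw [ha, hb, hc, hd]
    simp only [star_add, StarMul.star_mul, star_one, mul_add, add_mul, mul_one, one_mul]
    rw [← sub_eq_zero] at key ⊢
    rw [← key]
    noncomm_ring
  have key3 : ‖a * q + b‖ ^ 2 - ‖c * q + d‖ ^ 2 = ‖q‖ ^ 2 - 1 := by
    have h1 : ((normSq (a * q + b) : ℝ) : Quaternion ℝ) - (normSq (c * q + d) : ℝ)
        = ((normSq q : ℝ) : Quaternion ℝ) - 1 := by
      rw [← star_mul_self, ← star_mul_self, ← star_mul_self]; exact key2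
    have h1' : ((normSq (a * q + b) - normSq (c * q + d) : ℝ) : Quaternion ℝ)
        = ((normSq q - 1 : ℝ) : Quaternion ℝ) := by push_cast; exact h1
    have h2 : (normSq (a * q + b) : ℝ) - normSq (c * q + d) = normSq q - 1 :=
      Quaternion.coe_injective h1'
    simpa [Quaternion.normSq_eq_norm_mul_self, sq] using h2
  have hq0 : (0:ℝ) ≤ ‖q‖ := norm_nonneg _
  have hcd2 : ‖c * q + d‖ ^ 2 = ‖a * q + b‖ ^ 2 + (1 - ‖q‖ ^ 2) := by linarith
  have hpos : (0:ℝ) < ‖c * q + d‖ ^ 2 := by nlinarith [sq_nonneg ‖a * q + b‖]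
  have hcd0 : c * q + d ≠ 0 := by
    intro h
    rw [h, norm_zero] at hpos
    simp at hpos
  refine ⟨hcd0, ?_⟩
  have hlt : ‖a * q + b‖ < ‖c * q + d‖ := by
    nlinarith [norm_nonneg (a * q + b), norm_nonneg (c * q + d)]
  rw [norm_mul, norm_inv]
  rw [mul_inv_lt_iff₀ (norm_pos_iff.mpr hcd0)]
  simpa using hlt
end
end

section
/- Let g be a matrix in SU(1,1;ℍ) with row vectors (a,b) and (c,d), let p and q be quaternions with |p| = |q| = 1, and let Φ = g·diag(p,q)·g⁻¹ ∈ M₂(ℍ). Then Re(Φ₁₁) − Re(Φ₂₂) = (|a|² + |b|²)·(Re(p) − Re(q)). -/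
open Matrix Quaternion

noncomputable section

lemma re_conjq (x p : Quaternion ℝ) : (x * p * star x).re = ‖x‖^2 * p.re := by
  rw [sq, ← Quaternion.normSq_eq_norm_mul_self]
  simp [Quaternion.re_mul, Quaternion.normSq_def']
  ring

lemma re_star_self (x : Quaternion ℝ) : (star x * x).re = ‖x‖^2 := by
  rw [sq, ← Quaternion.normSq_eq_norm_mul_self]
  simp [Quaternion.re_mul, Quaternion.normSq_def']
  ring

theorem stmt7 (g : Matrix (Fin 2) (Fin 2) (Quaternion ℝ)) (hg : g ∈ SU11H)
    (a b c d : Quaternion ℝ)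
    (ha : a = g 0 0) (hb : b = g 0 1) (hc : c = g 1 0) (hd : d = g 1 1)
    (p q : Quaternion ℝ) (hp : ‖p‖ = 1) (hq : ‖q‖ = 1)
    (Φ : Matrix (Fin 2) (Fin 2) (Quaternion ℝ))
    (hΦ : Φ = g * Matrix.diagonal ![p, q] * (Jq * gᴴ * Jq)) :
    (Φ 0 0).re - (Φ 1 1).re = (‖a‖ ^ 2 + ‖b‖ ^ 2) * (p.re - q.re) := by
  have hg' : gᴴ * Jq * g = Jq := hg
  have h00 := congrFun (congrFun hg' 0) 0
  have h01 := congrFun (congrFun hg' 0) 1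
  have h11 := congrFun (congrFun hg' 1) 1
  simp only [Jq, Matrix.mul_apply, Fin.sum_univ_two, Matrix.conjTranspose_apply,
    Matrix.cons_val', Matrix.cons_val_zero, Matrix.cons_val_one, Matrix.head_cons,
    Matrix.head_fin_const, Matrix.empty_val', Matrix.cons_val_fin_one,
    Matrix.of_apply, mul_one, mul_neg, mul_zero, one_mul, neg_mul, zero_mul,
    add_zero, zero_add, neg_zero] at h00 h01 h11
  -- h00 : star (g 0 0) * g 0 0 + -(star (g 1 0) * g 1 0) = 1  (roughly)
  simp only [← ha, ← hb, ← hc, ← hd] at h00 h01 h11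
  have hΦ00 := congrFun (congrFun hΦ 0) 0
  have hΦ11 := congrFun (congrFun hΦ 1) 1
  simp only [Jq, Matrix.mul_apply, Fin.sum_univ_two, Matrix.conjTranspose_apply,
    Matrix.diagonal_apply, Matrix.cons_val', Matrix.cons_val_zero, Matrix.cons_val_one,
    Matrix.head_cons, Matrix.head_fin_const, Matrix.empty_val', Matrix.cons_val_fin_one,
    Matrix.of_apply, mul_one, mul_neg, mul_zero, one_mul, neg_mul, zero_mul,
    add_zero, zero_add, neg_zero, if_true, if_false, 
    ite_true, ite_false, reduceIte, Matrix.one_apply] at hΦ00 hΦ11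
  simp only [← ha, ← hb, ← hc, ← hd] at hΦ00 hΦ11
  norm_num at hΦ00 hΦ11
  have e00 : ‖a‖^2 - ‖c‖^2 = 1 := by
    have h := congrArg QuaternionAlgebra.re h00
    rw [Quaternion.re_add, Quaternion.re_neg, re_star_self, re_star_self,
      Quaternion.re_one] at h
    linarith
  have e11 : ‖b‖^2 - ‖d‖^2 = -1 := by
    have h := congrArg QuaternionAlgebra.re h11
    rw [Quaternion.re_add, Quaternion.re_neg, re_star_self, re_star_self,
      Quaternion.re_neg, Quaternion.re_one] at h
    linarith
  rw [add_neg_eq_zero] at h01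
  have hnorm : ‖a‖ * ‖b‖ = ‖c‖ * ‖d‖ := by
    have := congrArg norm h01
    simpa [norm_mul] using this
  have habcd : ‖a‖^2 * ‖b‖^2 = ‖c‖^2 * ‖d‖^2 := by
    have : (‖a‖ * ‖b‖)^2 = (‖c‖ * ‖d‖)^2 := by rw [hnorm]
    nlinarith [this]
  have hBC : ‖b‖^2 = ‖c‖^2 := by
    linear_combination habcd - ‖b‖^2 * e00 - ‖c‖^2 * e11
  rw [hΦ00, hΦ11]
  simp only [Quaternion.re_add, Quaternion.re_neg, re_conjq]
  linear_combination (-p.re - q.re) * hBC + q.re * e00 + q.re * e11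

end
end

section
/- Let τ = (1+√5)/2 and κ = √(1+3τ), and let σ̂ ∈ M₂(ℍ) be the matrix σ̂ = (√(τ−1)/2)·[[(1+τ)κ·i + κ·j − τκ·k, τ − (1+3τ)·i + (1+2τ)·k], [τ + (1+3τ)·i − (1+2τ)·k, −(1+τ)κ·i + κ·j + τκ·k]]. Then σ̂ ∈ SU(1,1;ℍ) and σ̂² = −I; in particular σ̂ has order 4 in SU(1,1;ℍ). -/
open Matrix Quaternion

noncomputable section

/-- The golden ratio τ = (1+√5)/2. -/
def tau : ℝ := (1 + Real.sqrt 5) / 2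

/-- κ = √(1+3τ). -/
def kap : ℝ := Real.sqrt (1 + 3 * tau)

/-- The lift σ̂ of the inside-out involution σ, as a 2×2 quaternionic matrix. -/
def sigmaHat : Matrix (Fin 2) (Fin 2) (Quaternion ℝ) :=
  (Real.sqrt (tau - 1) / 2) •
    !![⟨0, (1 + tau) * kap, kap, -(tau * kap)⟩, ⟨tau, -(1 + 3 * tau), 0, 1 + 2 * tau⟩;
       ⟨tau, 1 + 3 * tau, 0, -(1 + 2 * tau)⟩, ⟨0, -((1 + tau) * kap), kap, tau * kap⟩]

theorem qlit_mul (a b c d a' b' c' d' : ℝ) :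
    @HMul.hMul (Quaternion ℝ) (Quaternion ℝ) (Quaternion ℝ) _ ⟨a, b, c, d⟩ ⟨a', b', c', d'⟩ =
      ⟨a*a' - b*b' - c*c' - d*d', a*b' + b*a' + c*d' - d*c',
        a*c' - b*d' + c*a' + d*b', a*d' + b*c' - c*b' + d*a'⟩ := by
  ext
  · exact (Quaternion.re_mul _ _).trans (by dsimp only)
  · exact (Quaternion.imI_mul _ _).trans (by dsimp only)
  · exact (Quaternion.imJ_mul _ _).trans (by dsimp only)
  · exact (Quaternion.imK_mul _ _).trans (by dsimp only)

theorem qlit_smul (r a b c d : ℝ) :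
    @HSMul.hSMul ℝ (Quaternion ℝ) (Quaternion ℝ) _ r ⟨a, b, c, d⟩ = ⟨r*a, r*b, r*c, r*d⟩ := by
  ext
  · exact (Quaternion.re_smul _ _).trans (by dsimp only; rw [smul_eq_mul])
  · exact (Quaternion.imI_smul _ _).trans (by dsimp only; rw [smul_eq_mul])
  · exact (Quaternion.imJ_smul _ _).trans (by dsimp only; rw [smul_eq_mul])
  · exact (Quaternion.imK_smul _ _).trans (by dsimp only; rw [smul_eq_mul])

theorem qlit_star (a b c d : ℝ) :
    @star (Quaternion ℝ) _ ⟨a, b, c, d⟩ = ⟨a, -b, -c, -d⟩ := by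
  ext
  · exact (Quaternion.re_star _).trans (by dsimp only)
  · exact (Quaternion.imI_star _).trans (by dsimp only)
  · exact (Quaternion.imJ_star _).trans (by dsimp only)
  · exact (Quaternion.imK_star _).trans (by dsimp only)

theorem qlit_one : (1 : Quaternion ℝ) = ⟨1, 0, 0, 0⟩ := by
  ext <;> simp

theorem qlit_zero : (0 : Quaternion ℝ) = ⟨0, 0, 0, 0⟩ := by
  ext <;> simp

theorem qlit_add (a b c d a' b' c' d' : ℝ) :
    @HAdd.hAdd (Quaternion ℝ) (Quaternion ℝ) (Quaternion ℝ) _ ⟨a, b, c, d⟩ ⟨a', b', c', d'⟩ =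
      ⟨a + a', b + b', c + c', d + d'⟩ := rfl

theorem qlit_neg (a b c d : ℝ) :
    @Neg.neg (Quaternion ℝ) _ ⟨a, b, c, d⟩ = ⟨-a, -b, -c, -d⟩ := rfl

theorem qlit_eq (a b c d a' b' c' d' : ℝ) :
    (@Eq (Quaternion ℝ) ⟨a, b, c, d⟩ ⟨a', b', c', d'⟩) = (a = a' ∧ b = b' ∧ c = c' ∧ d = d') :=
  QuaternionAlgebra.mk.injEq _ _ _ _ _ _ _ _

set_option maxHeartbeats 1600000 in
theorem stmt9 : sigmaHat ∈ SU11H ∧ sigmaHat ^ 2 = -1 ∧ orderOf sigmaHat = 4 := by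
  have ht : tau ^ 2 = tau + 1 := by
    have h5 : Real.sqrt 5 ^ 2 = 5 := Real.sq_sqrt (by norm_num)
    unfold tau; nlinarith [h5]
  have h51 : (1:ℝ) ≤ Real.sqrt 5 := by
    rw [show (1:ℝ) = Real.sqrt 1 by simp]; exact Real.sqrt_le_sqrt (by norm_num)
  have htpos : (1:ℝ) ≤ tau := by unfold tau; linarith
  have hk : kap ^ 2 = 1 + 3 * tau := by
    unfold kap; rw [Real.sq_sqrt] <;> linarith
  have hs : Real.sqrt (-1 + tau) ^ 2 = -1 + tau := by
    rw [Real.sq_sqrt] <;> linarith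
  have hsu : sigmaHat ∈ SU11H := by
    show _ = _
    refine Matrix.ext fun i j => ?_
    fin_cases i <;> fin_cases j <;>
      simp [sigmaHat, Jq, Matrix.mul_apply, Fin.sum_univ_two, Quaternion.ext_iff,
        Matrix.conjTranspose_apply, Quaternion.re_mul, Quaternion.imI_mul,
        Quaternion.imJ_mul, Quaternion.imK_mul, qlit_mul, qlit_smul, qlit_star,
        qlit_one, qlit_zero, qlit_add, qlit_neg, qlit_eq, show tau - 1 = -1 + tau by ring] <;>
      ring_nf <;>
      rw [hs] <;> (try rw [hk]) <;> ring_nf <;> simp only [true_and, and_true] <;>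
      first
        | linear_combination (3/2*tau^2 - 3/2*tau + 1) * ht
        | linear_combination (-(3/2)*tau^2 + 3/2*tau - 1) * ht
        | linear_combination (kap*(tau-1)/2) * ht
        | linear_combination (-(kap*(tau-1))/2) * ht
  have h2 : sigmaHat ^ 2 = -1 := by
    rw [pow_two]
    refine Matrix.ext fun i j => ?_
    fin_cases i <;> fin_cases j <;>
      simp [sigmaHat, Matrix.mul_apply, Fin.sum_univ_two, Quaternion.ext_iff,
        Quaternion.re_mul, Quaternion.imI_mul, Quaternion.imJ_mul, Quaternion.imK_mul, qlit_mul, qlit_smul, qlit_star,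
        qlit_one, qlit_zero, qlit_add, qlit_neg, qlit_eq, show tau - 1 = -1 + tau by ring] <;>
      ring_nf <;>
      rw [hs] <;> (try rw [hk]) <;> ring_nf <;> simp only [true_and, and_true] <;>
      first
        | linear_combination (3/2*tau^2 - 3/2*tau + 1) * ht
        | linear_combination (-(3/2)*tau^2 + 3/2*tau - 1) * ht
        | linear_combination (kap*(tau-1)/2) * ht
        | linear_combination (-(kap*(tau-1))/2) * ht
  refine ⟨hsu, h2, ?_⟩
  have hne : sigmaHat ^ 2 ≠ 1 := by
    rw [h2]
    intro h
    have h00 := congrFun (congrFun h 0) 0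
    simp [Matrix.one_apply] at h00
    have := congrArg QuaternionAlgebra.re h00
    norm_num at this
  have h4 : sigmaHat ^ (4:ℕ) = 1 := by
    rw [show (4:ℕ) = 2 * 2 from rfl, pow_mul, h2]
    norm_num
  haveI : Fact (Nat.Prime 2) := ⟨by norm_num⟩
  have := orderOf_eq_prime_pow (x := sigmaHat) (p := 2) (n := 1)
    (by simpa using hne) (by simpa using h4)
  simpa using this
end
end

section
/- Let Ĝ be a group and let z be a central element of Ĝ with z ≠ 1 and z² = 1. Suppose f ∈ Ĝ has finite order and there exists ψ ∈ Ĝ with ψ·f·ψ⁻¹ = z·f. Then the image of f in the quotient group Ĝ/⟨z⟩ has even order. -/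
theorem stmt11 {G : Type*} [Group G] (z : G) (hz_center : z ∈ Subgroup.center G)
    (hz_ne : z ≠ 1) (hz_sq : z ^ 2 = 1) (f : G) (hf : IsOfFinOrder f)
    (ψ : G) (hψ : ψ * f * ψ⁻¹ = z * f)
    [(Subgroup.zpowers z).Normal] :
    Even (orderOf ((f : G ⧸ Subgroup.zpowers z))) := by
  set n := orderOf ((f : G ⧸ Subgroup.zpowers z)) with hn
  -- f^n lies in zpowers z
  have h1 : f ^ n ∈ Subgroup.zpowers z := by
    have h := pow_orderOf_eq_one ((f : G ⧸ Subgroup.zpowers z))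
    rw [← QuotientGroup.mk_pow] at h
    exact (QuotientGroup.eq_one_iff _).mp h
  -- f^n is central
  have hcent : f ^ n ∈ Subgroup.center G := by
    rcases h1 with ⟨k, hk⟩
    rw [← hk]
    exact Subgroup.zpow_mem _ hz_center k
  -- compute ψ * f^n * ψ⁻¹ two ways
  have hcomm : Commute z f := ((Subgroup.mem_center_iff.mp hz_center) f).symm
  have h2 : ψ * f ^ n * ψ⁻¹ = z ^ n * f ^ n := by
    have : (ψ * f * ψ⁻¹) ^ n = z ^ n * f ^ n := by
      rw [hψ, hcomm.mul_pow]
    simpa [conj_pow] using this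
  have h3 : ψ * f ^ n * ψ⁻¹ = f ^ n := by
    rw [Subgroup.mem_center_iff.mp hcent ψ]
    group
  have hzn : z ^ n = 1 := by
    have := h3.symm.trans h2
    calc z ^ n = z ^ n * f ^ n * (f ^ n)⁻¹ := by group
    _ = f ^ n * (f ^ n)⁻¹ := by rw [← this]
    _ = 1 := by group
  have hz2 : orderOf z = 2 := orderOf_eq_prime hz_sq hz_ne
  have : 2 ∣ n := hz2 ▸ orderOf_dvd_of_pow_eq_one hzn
  exact even_iff_two_dvd.mpr this
end
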